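/- arXiv:1809.08576 — 7 statements merged into one kernel-verified Lean document; each statement's English description precedes it below -/
import Mathlib

section
/- Let E_1 < E_2 < E_3 < E_4 and F_1 < F_2 < F_3 < F_4 be the four events of protocol executions E (by p_0) and F (by p_1) of Kishon's Poker algorithm, with all eight events embedded in a strict linear (interleaving) order extending the two process orders. Let n_0 > 0 and n_1 > 0 be the natural numbers picked by p_0 and p_1. By seriality of the registers, the read E_3 returns v_0 = n_1 if F_2 < E_3 and v_0 = 0 otherwise, and the read F_3 returns v_1 = n_0 if E_2 < F_3 and v_1 = 0 otherwise. Let val_0 = 0 if v_0 = 0 or v_0 = n_0, val_0 = 1 if 0 < v_0 < n_0, and val_0 = -1 if v_0 > n_0, and let val_1 be defined symmetrically from v_1 and n_1. Then: if n_0 < n_1 then val_0 < val_1; if n_1 < n_0 then val_1 < val_0; and if n_0 = n_1 then val_0 = val_1 = 0. -/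
/- STATEMENT 0: Kishon's Poker algorithm with serial registers, the events of
both protocol executions embedded in a strict linear (interleaving) order. -/
theorem kishon_serial_correctness
    {α : Type*} [LinearOrder α]
    (E1 E2 E3 E4 F1 F2 F3 F4 : α)
    (hE12 : E1 < E2) (hE23 : E2 < E3) (hE34 : E3 < E4)
    (hF12 : F1 < F2) (hF23 : F2 < F3) (hF34 : F3 < F4)
    (n0 n1 : ℕ) (hn0 : 0 < n0) (hn1 : 0 < n1)
    (v0 v1 : ℕ)
    -- seriality of the registers determines the values of the reads:
    (hv0 : v0 = if F2 < E3 then n1 else 0)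
    (hv1 : v1 = if E2 < F3 then n0 else 0)
    (val0 val1 : ℤ)
    (hval0_zero : v0 = 0 ∨ v0 = n0 → val0 = 0)
    (hval0_one  : 0 < v0 ∧ v0 < n0 → val0 = 1)
    (hval0_neg  : n0 < v0 → val0 = -1)
    (hval1_zero : v1 = 0 ∨ v1 = n1 → val1 = 0)
    (hval1_one  : 0 < v1 ∧ v1 < n1 → val1 = 1)
    (hval1_neg  : n1 < v1 → val1 = -1) :
    (n0 < n1 → val0 < val1) ∧
    (n1 < n0 → val1 < val0) ∧
    (n0 = n1 → val0 = 0 ∧ val1 = 0) := by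
  have key : F2 < E3 ∨ E2 < F3 := by
    rcases lt_or_ge F2 E3 with h | h
    · exact Or.inl h
    · exact Or.inr (lt_of_lt_of_le hE23 (h.trans hF23.le))
  by_cases h0 : F2 < E3 <;> by_cases h1 : E2 < F3 <;>
    simp only [h0, h1, if_true, if_false] at hv0 hv1 <;>
    simp only [hv0, hv1] at hval0_zero hval0_one hval0_neg hval1_zero hval1_one hval1_neg
  · rcases lt_trichotomy n0 n1 with h | h | h
    · have e0 := hval0_neg h
      have e1 := hval1_one ⟨hn0, h⟩
      exact ⟨fun _ => by omega, fun hh => absurd h (by omega), fun hh => absurd h (by omega)⟩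
    · subst h
      have e0 := hval0_zero (Or.inr rfl)
      have e1 := hval1_zero (Or.inr rfl)
      exact ⟨fun hh => absurd hh (by omega), fun hh => absurd hh (by omega), fun _ => ⟨e0, e1⟩⟩
    · have e0 := hval0_one ⟨hn1, h⟩
      have e1 := hval1_neg h
      exact ⟨fun hh => absurd h (by omega), fun _ => by omega, fun hh => absurd h (by omega)⟩
  · have e1 := hval1_zero (Or.inl (by simp))
    rcases lt_trichotomy n0 n1 with h | h | h
    · have e0 := hval0_neg h
      exact ⟨fun _ => by omega, fun hh => absurd h (by omega), fun hh => absurd h (by omega)⟩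
    · subst h
      have e0 := hval0_zero (Or.inr rfl)
      exact ⟨fun hh => absurd hh (by omega), fun hh => absurd hh (by omega), fun _ => ⟨e0, e1⟩⟩
    · have e0 := hval0_one ⟨hn1, h⟩
      exact ⟨fun hh => absurd h (by omega), fun _ => by omega, fun hh => absurd h (by omega)⟩
  · have e0 := hval0_zero (Or.inl (by simp))
    rcases lt_trichotomy n0 n1 with h | h | h
    · have e1 := hval1_one ⟨hn0, h⟩
      exact ⟨fun _ => by omega, fun hh => absurd h (by omega), fun hh => absurd h (by omega)⟩
    · subst h
      have e1 := hval1_zero (Or.inr rfl)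
      exact ⟨fun hh => absurd hh (by omega), fun hh => absurd hh (by omega), fun _ => ⟨e0, e1⟩⟩
    · have e1 := hval1_neg h
      exact ⟨fun hh => absurd h (by omega), fun _ => by omega, fun hh => absurd h (by omega)⟩
  · exact absurd key (by simp [h0, h1])
end

section
/- Under the hypotheses of a restricted system execution of Kishon's Poker algorithm with regular registers: (1) if Val(a_1) < Val(b_1) then Val(a_4) < Val(b_4); (2) if Val(a_1) > Val(b_1) then Val(a_4) > Val(b_4); (3) if Val(a_1) = Val(b_1) then Val(a_4) = Val(b_4) = 0. -/
/- STATEMENT 2: correctness of Kishon's Poker algorithm with regular registers. -/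
theorem kishon_regular_correctness
    {α : Type*} (lt : α → α → Prop)
    (hirr : ∀ a, ¬ lt a a)
    (htrans : ∀ a b c, lt a b → lt b c → lt a c)
    (hRW : ∀ a b c d, lt a b → lt c d → ¬ lt c b → lt a d)
    (a1 a2 a3 a4 b1 b2 b3 b4 : α)
    (ha12 : lt a1 a2) (ha23 : lt a2 a3) (ha34 : lt a3 a4)
    (hb12 : lt b1 b2) (hb23 : lt b2 b3) (hb34 : lt b3 b4)
    (Val : α → ℤ)
    -- Val maps into ℕ ∪ {-1}
    (hrange : ∀ e, Val e = -1 ∨ 0 ≤ Val e)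
    -- non-restricted properties of process p₀
    (ha1pos : 0 < Val a1) (ha2 : Val a2 = Val a1) (ha3nat : 0 ≤ Val a3)
    (ha4zero : Val a3 = 0 ∨ Val a3 = Val a1 → Val a4 = 0)
    (ha4one  : 0 < Val a3 ∧ Val a3 < Val a1 → Val a4 = 1)
    (ha4neg  : Val a1 < Val a3 → Val a4 = -1)
    -- non-restricted properties of process p₁
    (hb1pos : 0 < Val b1) (hb2 : Val b2 = Val b1) (hb3nat : 0 ≤ Val b3)
    (hb4zero : Val b3 = 0 ∨ Val b3 = Val b1 → Val b4 = 0)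
    (hb4one  : 0 < Val b3 ∧ Val b3 < Val b1 → Val b4 = 1)
    (hb4neg  : Val b1 < Val b3 → Val b4 = -1)
    -- regularity of register R₀ (unique write a2, read b3, initial value 0)
    (hregb3 : Val b3 = 0 ∨ Val b3 = Val a2)
    (hregb3w : lt a2 b3 → Val b3 = Val a2)
    (hregb3r : lt b3 a2 → Val b3 = 0)
    -- regularity of register R₁ (unique write b2, read a3, initial value 0)
    (hrega3 : Val a3 = 0 ∨ Val a3 = Val b2)
    (hrega3w : lt b2 a3 → Val a3 = Val b2)
    (hrega3r : lt a3 b2 → Val a3 = 0) :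
    (Val a1 < Val b1 → Val a4 < Val b4) ∧
    (Val b1 < Val a1 → Val b4 < Val a4) ∧
    (Val a1 = Val b1 → Val a4 = 0 ∧ Val b4 = 0) := by

  by_cases hA0 : Val a3 = 0
  · have hnb2a3 : ¬ lt b2 a3 := fun h => by
      have := hrega3w h; rw [hb2] at this; omega
    have hltab : lt a2 b3 := hRW a2 a3 b2 b3 ha23 hb23 hnb2a3
    have hb3 : Val b3 = Val a1 := by rw [hregb3w hltab, ha2]
    have ha4 : Val a4 = 0 := ha4zero (Or.inl hA0)
    refine ⟨fun h => ?_, fun h => ?_, fun h => ?_⟩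
    · have := hb4one ⟨by omega, by omega⟩; omega
    · have := hb4neg (by omega); omega
    · exact ⟨ha4, hb4zero (Or.inr (by omega))⟩
  · have hA : Val a3 = Val b1 := by
      rcases hrega3 with h | h
      · exact absurd h hA0
      · rw [h, hb2]
    by_cases hB0 : Val b3 = 0
    · have hb4 : Val b4 = 0 := hb4zero (Or.inl hB0)
      refine ⟨fun h => ?_, fun h => ?_, fun h => ?_⟩
      · have := ha4neg (by omega); omega
      · have := ha4one ⟨by omega, by omega⟩; omega
      · exact ⟨ha4zero (Or.inr (by omega)), hb4⟩
    · have hB : Val b3 = Val a1 := by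
        rcases hregb3 with h | h
        · exact absurd h hB0
        · rw [h, ha2]
      refine ⟨fun h => ?_, fun h => ?_, fun h => ?_⟩
      · have h1 := ha4neg (by omega)
        have h2 := hb4one ⟨by omega, by omega⟩
        omega
      · have h1 := hb4neg (by omega)
        have h2 := ha4one ⟨by omega, by omega⟩
        omega
      · exact ⟨ha4zero (Or.inr (by omega)), hb4zero (Or.inr (by omega))⟩
end

section
/- Under the hypotheses of a restricted system execution of Kishon's Poker algorithm with regular registers, it is not the case that Val(a_3) = 0 and Val(b_3) = 0. -/
/- STATEMENT 3: it is not the case that Val(a₃) = 0 and Val(b₃) = 0. -/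
theorem kishon_not_both_reads_zero
    {α : Type*} (lt : α → α → Prop)
    (hirr : ∀ a, ¬ lt a a)
    (htrans : ∀ a b c, lt a b → lt b c → lt a c)
    (hRW : ∀ a b c d, lt a b → lt c d → ¬ lt c b → lt a d)
    (a1 a2 a3 a4 b1 b2 b3 b4 : α)
    (ha12 : lt a1 a2) (ha23 : lt a2 a3) (ha34 : lt a3 a4)
    (hb12 : lt b1 b2) (hb23 : lt b2 b3) (hb34 : lt b3 b4)
    (Val : α → ℤ)
    -- Val maps into ℕ ∪ {-1}
    (hrange : ∀ e, Val e = -1 ∨ 0 ≤ Val e)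
    -- non-restricted properties of process p₀
    (ha1pos : 0 < Val a1) (ha2 : Val a2 = Val a1) (ha3nat : 0 ≤ Val a3)
    (ha4zero : Val a3 = 0 ∨ Val a3 = Val a1 → Val a4 = 0)
    (ha4one  : 0 < Val a3 ∧ Val a3 < Val a1 → Val a4 = 1)
    (ha4neg  : Val a1 < Val a3 → Val a4 = -1)
    -- non-restricted properties of process p₁
    (hb1pos : 0 < Val b1) (hb2 : Val b2 = Val b1) (hb3nat : 0 ≤ Val b3)
    (hb4zero : Val b3 = 0 ∨ Val b3 = Val b1 → Val b4 = 0)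
    (hb4one  : 0 < Val b3 ∧ Val b3 < Val b1 → Val b4 = 1)
    (hb4neg  : Val b1 < Val b3 → Val b4 = -1)
    -- regularity of register R₀ (unique write a2, read b3, initial value 0)
    (hregb3 : Val b3 = 0 ∨ Val b3 = Val a2)
    (hregb3w : lt a2 b3 → Val b3 = Val a2)
    (hregb3r : lt b3 a2 → Val b3 = 0)
    -- regularity of register R₁ (unique write b2, read a3, initial value 0)
    (hrega3 : Val a3 = 0 ∨ Val a3 = Val b2)
    (hrega3w : lt b2 a3 → Val a3 = Val b2)
    (hrega3r : lt a3 b2 → Val a3 = 0) :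
    ¬ (Val a3 = 0 ∧ Val b3 = 0) := by
  rintro ⟨h3, h3'⟩
  have hnb2a3 : ¬ lt b2 a3 := fun h => by
    have := hrega3w h; omega
  have : lt a2 b3 := hRW a2 a3 b2 b3 ha23 hb23 hnb2a3
  have := hregb3w this
  omega
end

section
/- Under the hypotheses of a restricted system execution of Kishon's Poker algorithm with regular registers, suppose Val(a_1) < Val(b_1). Then: (1) if Val(b_3) ≠ 0 then Val(b_4) = 1; (2) if Val(a_3) ≠ 0 then Val(a_4) = -1. -/
/- STATEMENT 4: if Val(a₁) < Val(b₁) then nonzero reads determine the returns. -/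
theorem kishon_nonzero_read_returns
    {α : Type*} (lt : α → α → Prop)
    (hirr : ∀ a, ¬ lt a a)
    (htrans : ∀ a b c, lt a b → lt b c → lt a c)
    (hRW : ∀ a b c d, lt a b → lt c d → ¬ lt c b → lt a d)
    (a1 a2 a3 a4 b1 b2 b3 b4 : α)
    (ha12 : lt a1 a2) (ha23 : lt a2 a3) (ha34 : lt a3 a4)
    (hb12 : lt b1 b2) (hb23 : lt b2 b3) (hb34 : lt b3 b4)
    (Val : α → ℤ)
    -- Val maps into ℕ ∪ {-1}
    (hrange : ∀ e, Val e = -1 ∨ 0 ≤ Val e)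
    -- non-restricted properties of process p₀
    (ha1pos : 0 < Val a1) (ha2 : Val a2 = Val a1) (ha3nat : 0 ≤ Val a3)
    (ha4zero : Val a3 = 0 ∨ Val a3 = Val a1 → Val a4 = 0)
    (ha4one  : 0 < Val a3 ∧ Val a3 < Val a1 → Val a4 = 1)
    (ha4neg  : Val a1 < Val a3 → Val a4 = -1)
    -- non-restricted properties of process p₁
    (hb1pos : 0 < Val b1) (hb2 : Val b2 = Val b1) (hb3nat : 0 ≤ Val b3)
    (hb4zero : Val b3 = 0 ∨ Val b3 = Val b1 → Val b4 = 0)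
    (hb4one  : 0 < Val b3 ∧ Val b3 < Val b1 → Val b4 = 1)
    (hb4neg  : Val b1 < Val b3 → Val b4 = -1)
    -- regularity of register R₀ (unique write a2, read b3, initial value 0)
    (hregb3 : Val b3 = 0 ∨ Val b3 = Val a2)
    (hregb3w : lt a2 b3 → Val b3 = Val a2)
    (hregb3r : lt b3 a2 → Val b3 = 0)
    -- regularity of register R₁ (unique write b2, read a3, initial value 0)
    (hrega3 : Val a3 = 0 ∨ Val a3 = Val b2)
    (hrega3w : lt b2 a3 → Val a3 = Val b2)
    (hrega3r : lt a3 b2 → Val a3 = 0)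
    (hlt : Val a1 < Val b1) :
    (Val b3 ≠ 0 → Val b4 = 1) ∧
    (Val a3 ≠ 0 → Val a4 = -1) := by
  constructor
  · intro h
    rcases hregb3 with h0 | h2
    · exact absurd h0 h
    · exact hb4one ⟨by omega, by omega⟩
  · intro h
    rcases hrega3 with h0 | h2
    · exact absurd h0 h
    · exact ha4neg (by omega)
end

section
/- If S_0, …, S_8 is a terminating history sequence of Kishon's Poker algorithm, then for each i ∈ {0, 1}, the final state S_8 satisfies: if n_i < n_{1-i} then val_i < val_{1-i}. -/
/-- A global state of Kishon's Poker algorithm.  The variables `valᵢ` and `PCᵢ`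
are given ambient types `ℤ` and `ℕ`; the typing condition
(`valᵢ ∈ {-1,0,1}`, `PCᵢ ∈ {1,…,5}`) is the predicate `tauP` below. -/
structure KState where
  n0 : ℕ
  v0 : ℕ
  R0 : ℕ
  val0 : ℤ
  PC0 : ℕ
  n1 : ℕ
  v1 : ℕ
  R1 : ℕ
  val1 : ℤ
  PC1 : ℕ

/-- The initial state. -/
def KInit (S : KState) : Prop :=
  S.PC0 = 1 ∧ S.PC1 = 1 ∧ S.n0 = 0 ∧ S.v0 = 0 ∧ S.R0 = 0 ∧ S.val0 = 0 ∧
  S.n1 = 0 ∧ S.v1 = 0 ∧ S.R1 = 0 ∧ S.val1 = 0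

/-- A final state. -/
def KFinal (S : KState) : Prop := S.PC0 = 5 ∧ S.PC1 = 5

/-- The variables of process `p₁` are unchanged. -/
def Unch1 (S T : KState) : Prop :=
  T.n1 = S.n1 ∧ T.v1 = S.v1 ∧ T.R1 = S.R1 ∧ T.val1 = S.val1 ∧ T.PC1 = S.PC1

/-- The variables of process `p₀` are unchanged. -/
def Unch0 (S T : KState) : Prop :=
  T.n0 = S.n0 ∧ T.v0 = S.v0 ∧ T.R0 = S.R0 ∧ T.val0 = S.val0 ∧ T.PC0 = S.PC0

/-- A step of process `p₀`. -/
def Step0 (S T : KState) : Prop :=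
  Unch1 S T ∧
  ( -- (1₀,2₀): pick-a-number
    (S.PC0 = 1 ∧ T.PC0 = 2 ∧ 0 < T.n0 ∧
      T.v0 = S.v0 ∧ T.R0 = S.R0 ∧ T.val0 = S.val0) ∨
    -- (2₀,3₀): write R₀ := n₀
    (S.PC0 = 2 ∧ T.PC0 = 3 ∧ T.R0 = S.n0 ∧
      T.n0 = S.n0 ∧ T.v0 = S.v0 ∧ T.val0 = S.val0) ∨
    -- (3₀,4₀): read v₀ := R₁
    (S.PC0 = 3 ∧ T.PC0 = 4 ∧ T.v0 = S.R1 ∧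
      T.n0 = S.n0 ∧ T.R0 = S.R0 ∧ T.val0 = S.val0) ∨
    -- (4₀,5₀): compute val₀
    (S.PC0 = 4 ∧ T.PC0 = 5 ∧
      ((S.v0 = 0 ∨ S.v0 = S.n0) → T.val0 = 0) ∧
      (0 < S.v0 ∧ S.v0 < S.n0 → T.val0 = 1) ∧
      (S.n0 < S.v0 → T.val0 = -1) ∧
      T.n0 = S.n0 ∧ T.v0 = S.v0 ∧ T.R0 = S.R0))

/-- A step of process `p₁`. -/
def Step1 (S T : KState) : Prop :=
  Unch0 S T ∧
  ( (S.PC1 = 1 ∧ T.PC1 = 2 ∧ 0 < T.n1 ∧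
      T.v1 = S.v1 ∧ T.R1 = S.R1 ∧ T.val1 = S.val1) ∨
    (S.PC1 = 2 ∧ T.PC1 = 3 ∧ T.R1 = S.n1 ∧
      T.n1 = S.n1 ∧ T.v1 = S.v1 ∧ T.val1 = S.val1) ∨
    (S.PC1 = 3 ∧ T.PC1 = 4 ∧ T.v1 = S.R0 ∧
      T.n1 = S.n1 ∧ T.R1 = S.R1 ∧ T.val1 = S.val1) ∨
    (S.PC1 = 4 ∧ T.PC1 = 5 ∧
      ((S.v1 = 0 ∨ S.v1 = S.n1) → T.val1 = 0) ∧
      (0 < S.v1 ∧ S.v1 < S.n1 → T.val1 = 1) ∧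
      (S.n1 < S.v1 → T.val1 = -1) ∧
      T.n1 = S.n1 ∧ T.v1 = S.v1 ∧ T.R1 = S.R1))

/-- A step is a step of `p₀` or of `p₁`. -/
def KStep (S T : KState) : Prop := Step0 S T ∨ Step1 S T

/-- `H 0, …, H k` is a history sequence. -/
def KHistory (H : ℕ → KState) (k : ℕ) : Prop :=
  KInit (H 0) ∧ ∀ j, j < k → KStep (H j) (H (j + 1))

/-- Inductive invariant for Kishon's Poker. -/
def KInv (S : KState) : Prop :=
  (1 ≤ S.PC0 ∧ S.PC0 ≤ 5) ∧ (1 ≤ S.PC1 ∧ S.PC1 ≤ 5) ∧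
  (S.PC0 = 1 → S.n0 = 0) ∧ (2 ≤ S.PC0 → 0 < S.n0) ∧
  (S.PC0 ≤ 2 → S.R0 = 0) ∧ (3 ≤ S.PC0 → S.R0 = S.n0) ∧
  (4 ≤ S.PC0 → S.v0 = 0 ∨ (S.v0 = S.n1 ∧ 0 < S.n1)) ∧
  (4 ≤ S.PC0 ∧ S.v0 = 0 → S.PC1 ≤ 3 ∨ S.v1 = S.n0) ∧
  (S.PC0 = 5 → ((S.v0 = 0 ∨ S.v0 = S.n0) ∧ S.val0 = 0) ∨
    (0 < S.v0 ∧ S.v0 < S.n0 ∧ S.val0 = 1) ∨ (S.n0 < S.v0 ∧ S.val0 = -1)) ∧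
  (S.PC1 = 1 → S.n1 = 0) ∧ (2 ≤ S.PC1 → 0 < S.n1) ∧
  (S.PC1 ≤ 2 → S.R1 = 0) ∧ (3 ≤ S.PC1 → S.R1 = S.n1) ∧
  (4 ≤ S.PC1 → S.v1 = 0 ∨ (S.v1 = S.n0 ∧ 0 < S.n0)) ∧
  (4 ≤ S.PC1 ∧ S.v1 = 0 → S.PC0 ≤ 3 ∨ S.v0 = S.n1) ∧
  (S.PC1 = 5 → ((S.v1 = 0 ∨ S.v1 = S.n1) ∧ S.val1 = 0) ∨
    (0 < S.v1 ∧ S.v1 < S.n1 ∧ S.val1 = 1) ∨ (S.n1 < S.v1 ∧ S.val1 = -1))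

lemma KInv_init {S : KState} (h : KInit S) : KInv S := by
  obtain ⟨h1, h2, h3, h4, h5, h6, h7, h8, h9, h10⟩ := h
  unfold KInv; omega

set_option maxHeartbeats 2000000 in
lemma KInv_step {S T : KState} (hI : KInv S) (hst : KStep S T) : KInv T := by
  unfold KInv at hI ⊢
  obtain ⟨i1, i2, i3, i4, i5, i6, i7, i8, i9, i10, i11, i12, i13, i14, i15, i16⟩ := hI
  rcases hst with ⟨⟨u1, u2, u3, u4, u5⟩, h⟩ | ⟨⟨u1, u2, u3, u4, u5⟩, h⟩ <;>
    rcases h with ⟨a1, a2, a3, a4, a5, a6⟩ | ⟨a1, a2, a3, a4, a5, a6⟩ |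
      ⟨a1, a2, a3, a4, a5, a6⟩ | ⟨a1, a2, a3, a4, a5, a6, a7, a8⟩ <;>
    refine ⟨?_, ?_, ?_, ?_, ?_, ?_, ?_, ?_, ?_, ?_, ?_, ?_, ?_, ?_, ?_, ?_⟩ <;>
    first
      | (clear i7 i8 i9 i14 i15 i16; omega)
      | (clear i8 i9 i14 i15 i16; omega)
      | (clear i7 i9 i14 i15 i16; omega)
      | (clear i7 i8 i14 i15 i16; omega)
      | (clear i7 i8 i9 i15 i16; omega)
      | (clear i7 i8 i9 i14 i16; omega)
      | (clear i7 i8 i9 i14 i15; omega)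

/- STATEMENT 5: in a terminating history sequence S₀,…,S₈ of Kishon's Poker
algorithm, the final state satisfies: for each i ∈ {0,1},
if nᵢ < n₍₁₋ᵢ₎ then valᵢ < val₍₁₋ᵢ₎. -/
theorem kishon_history_correctness
    (H : ℕ → KState) (hH : KHistory H 8) (hfin : KFinal (H 8)) :
    ((H 8).n0 < (H 8).n1 → (H 8).val0 < (H 8).val1) ∧
    ((H 8).n1 < (H 8).n0 → (H 8).val1 < (H 8).val0) := by
  obtain ⟨hinit, hstep⟩ := hH
  have h0 := KInv_init hinit
  have h1 := KInv_step h0 (hstep 0 (by norm_num))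
  have h2 := KInv_step h1 (hstep 1 (by norm_num))
  have h3 := KInv_step h2 (hstep 2 (by norm_num))
  have h4 := KInv_step h3 (hstep 3 (by norm_num))
  have h5 := KInv_step h4 (hstep 4 (by norm_num))
  have h6 := KInv_step h5 (hstep 5 (by norm_num))
  have h7 := KInv_step h6 (hstep 6 (by norm_num))
  have h8 : KInv (H 8) := KInv_step h7 (hstep 7 (by norm_num))
  obtain ⟨hp0, hp1⟩ := hfin
  unfold KInv at h8
  obtain ⟨i1, i2, i3, i4, i5, i6, i7, i8, i9, i10, i11, i12, i13, i14, i15, i16⟩ := h8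
  have hn0 : 0 < (H 8).n0 := i4 (by omega)
  have hn1 : 0 < (H 8).n1 := i11 (by omega)
  have e9 := i9 hp0
  have e16 := i16 hp1
  have e7 := i7 (by omega)
  have e14 := i14 (by omega)
  have e8 : (H 8).v0 ≠ 0 ∨ (H 8).v1 = (H 8).n0 := by
    by_cases hv : (H 8).v0 = 0
    · rcases i8 ⟨by omega, hv⟩ with h | h
      · omega
      · exact Or.inr h
    · exact Or.inl hv
  have e15 : (H 8).v1 ≠ 0 ∨ (H 8).v0 = (H 8).n1 := by
    by_cases hv : (H 8).v1 = 0
    · rcases i15 ⟨by omega, hv⟩ with h | h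
      · omega
      · exact Or.inr h
    · exact Or.inl hv
  clear i3 i5 i6 i7 i8 i9 i10 i12 i13 i14 i15 i16 hstep
  rcases e7 with h7 | ⟨h7, -⟩ <;> rcases e14 with h14 | ⟨h14, -⟩ <;>
    rcases e9 with ⟨h9 | h9, h9'⟩ | ⟨h9a, h9b, h9'⟩ | ⟨h9, h9'⟩ <;>
    rcases e16 with ⟨h16 | h16, h16'⟩ | ⟨h16a, h16b, h16'⟩ | ⟨h16, h16'⟩ <;>
    rcases e8 with h8' | h8' <;> rcases e15 with h15' | h15' <;>
    exact ⟨by intro; omega, by intro; omega⟩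
end

section
/- The condition φ = α ∧ β ∧ γ ∧ τ is an invariant of Kishon's Poker algorithm: it holds in the initial state, and for every step (S, T), if φ holds in S then φ holds in T. -/
/-- α: the conjunction α1–α5 about process `p₀`. -/
def alphaP (S : KState) : Prop :=
  (2 ≤ S.PC0 → 0 < S.n0) ∧
  (S.PC0 ≤ 2 → S.R0 = 0) ∧
  (3 ≤ S.PC0 → S.R0 = S.n0) ∧
  (S.v0 ≠ 0 → S.v0 = S.R1) ∧
  (S.PC0 = 5 →
    (S.v0 = 0 → S.val0 = 0) ∧ (S.v0 = S.n0 → S.val0 = 0) ∧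
    (0 < S.v0 ∧ S.v0 < S.n0 → S.val0 = 1) ∧ (S.n0 < S.v0 → S.val0 = -1))

/-- β: the conjunction β1–β5 about process `p₁`. -/
def betaP (S : KState) : Prop :=
  (2 ≤ S.PC1 → 0 < S.n1) ∧
  (S.PC1 ≤ 2 → S.R1 = 0) ∧
  (3 ≤ S.PC1 → S.R1 = S.n1) ∧
  (S.v1 ≠ 0 → S.v1 = S.R0) ∧
  (S.PC1 = 5 →
    (S.v1 = 0 → S.val1 = 0) ∧ (S.v1 = S.n1 → S.val1 = 0) ∧
    (0 < S.v1 ∧ S.v1 < S.n1 → S.val1 = 1) ∧ (S.n1 < S.v1 → S.val1 = -1))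

/-- γ. -/
def gammaP (S : KState) : Prop :=
  4 ≤ S.PC0 ∧ 4 ≤ S.PC1 → S.v0 = S.R1 ∨ S.v1 = S.R0

/-- τ: every state variable has a value in its type. -/
def tauP (S : KState) : Prop :=
  (S.val0 = -1 ∨ S.val0 = 0 ∨ S.val0 = 1) ∧
  (S.val1 = -1 ∨ S.val1 = 0 ∨ S.val1 = 1) ∧
  (1 ≤ S.PC0 ∧ S.PC0 ≤ 5) ∧ (1 ≤ S.PC1 ∧ S.PC1 ≤ 5)

/-- φ = α ∧ β ∧ γ ∧ τ. -/
def phiP (S : KState) : Prop := alphaP S ∧ betaP S ∧ gammaP S ∧ tauP S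

/- STATEMENT 6: φ = α ∧ β ∧ γ ∧ τ is an invariant of Kishon's Poker algorithm. -/
set_option maxHeartbeats 2000000 in
theorem kishon_phi_invariant :
    (∀ S : KState, KInit S → phiP S) ∧
    (∀ S T : KState, KStep S T → phiP S → phiP T) := by
  constructor
  · rintro S ⟨h1,h2,h3,h4,h5,h6,h7,h8,h9,h10⟩
    simp only [phiP, alphaP, betaP, gammaP, tauP, ne_eq]
    omega
  · intro S T hst hphi
    obtain ⟨⟨a1,a2,a3,a4,a5⟩,⟨b1,b2,b3,b4,b5⟩,g,t1,t2,t3,t4⟩ := hphi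
    simp only [alphaP, betaP, gammaP, tauP, ne_eq] at *
    rcases hst with ⟨⟨u1,u2,u3,u4,u5⟩, hc⟩ | ⟨⟨u1,u2,u3,u4,u5⟩, hc⟩ <;>
      rcases hc with ⟨p,q,r,e1,e2,e3⟩|⟨p,q,r,e1,e2,e3⟩|⟨p,q,r,e1,e2,e3⟩|⟨p,q,hz,ho,hm,e1,e2,e3⟩ <;>
      refine ⟨⟨?_,?_,?_,?_,?_⟩,⟨?_,?_,?_,?_,?_⟩,?_,?_,?_,?_,?_⟩ <;>
      first
        | (clear a5 b5 t1 t2 g; omega)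
        | (clear a5 b5 t2 g; omega)
        | (clear a5 b5 t1 g; omega)
        | (clear b5 t1 t2 g b1 b2 b3 b4; omega)
        | (clear a5 t1 t2 g a1 a2 a3 a4; omega)
        | (simp only [gammaP]; clear a5 b5 t1 t2; omega)
end

section
/- Let S be any state such that S satisfies φ ∧ PC_0 = 5 ∧ PC_1 = 5. Then: (1) if n_0 = n_1 in S then val_0 = val_1 = 0 in S; and (2) for each i ∈ {0, 1}, if n_i < n_{1-i} in S then val_i < val_{1-i} in S. -/
/- STATEMENT 7: if S satisfies φ ∧ PC₀ = 5 ∧ PC₁ = 5, then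
(1) n₀ = n₁ → val₀ = val₁ = 0, and (2) for each i, nᵢ < n₍₁₋ᵢ₎ → valᵢ < val₍₁₋ᵢ₎. -/
theorem kishon_final_state_lemma
    (S : KState) (hphi : phiP S) (h0 : S.PC0 = 5) (h1 : S.PC1 = 5) :
    (S.n0 = S.n1 → S.val0 = 0 ∧ S.val1 = 0) ∧
    (S.n0 < S.n1 → S.val0 < S.val1) ∧
    (S.n1 < S.n0 → S.val1 < S.val0) := by
  obtain ⟨⟨ha1, ha2, ha3, ha4, ha5⟩, ⟨hb1, hb2, hb3, hb4, hb5⟩, hg, ht0, ht1, _⟩ := hphi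
  have hR0 : S.R0 = S.n0 := ha3 (by omega)
  have hR1 : S.R1 = S.n1 := hb3 (by omega)
  have hn0 : 0 < S.n0 := ha1 (by omega)
  have hn1 : 0 < S.n1 := hb1 (by omega)
  obtain ⟨hv01, hv02, hv03, hv04⟩ := ha5 h0
  obtain ⟨hv11, hv12, hv13, hv14⟩ := hb5 h1
  have hg' := hg ⟨by omega, by omega⟩
  rcases Nat.eq_zero_or_pos S.v0 with h|h <;>
    rcases Nat.eq_zero_or_pos S.v1 with h'|h'
  · rcases hg' with hc|hc <;> omega
  · have := hb4 (by omega)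
    rcases lt_trichotomy S.v1 S.n1 with hq|hq|hq <;>
      simp_all <;> omega
  · have := ha4 (by omega)
    rcases lt_trichotomy S.v0 S.n0 with hq|hq|hq <;>
      simp_all <;> omega
  · have e0 := ha4 (by omega)
    have e1 := hb4 (by omega)
    rcases lt_trichotomy S.v0 S.n0 with hq|hq|hq <;>
      rcases lt_trichotomy S.v1 S.n1 with hq'|hq'|hq' <;>
      simp_all <;> omega
end
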